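/- Let V be a vector space over a field k, let R be a Hecke symmetry on V with parameter q, and let ζ be an invertible linear operator on V such that ζ⊗ζ commutes with R, i.e. (ζ⊗ζ)∘R = R∘(ζ⊗ζ). Then: (a) (ζ⊗Id_V)∘R∘(ζ⁻¹⊗Id_V) = (Id_V⊗ζ⁻¹)∘R∘(Id_V⊗ζ); call this operator R_ζ (the twist of R by ζ); (b) R_ζ is again a Hecke symmetry with the same parameter q (it satisfies the braid equation and the Hecke relation); (c) Im(R_ζ − q·Id_{V⊗V}) = (ζ⊗Id_V)(Im(R − q·Id_{V⊗V})); and (d) ζ⊗ζ commutes with R_ζ and (ζ⁻¹⊗Id_V)∘R_ζ∘(ζ⊗Id_V) = R. -/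

import Mathlib

open TensorProduct LinearMap

noncomputable section

section AuxMonoid
variable {M : Type*} [Monoid M]

theorem aux_conj_self (u : Mˣ) (z : M) (h : Commute (u : M) z) : (u : M) * z * ↑u⁻¹ = z := by
  rw [h.eq, Units.mul_inv_cancel_right]

theorem aux_conj_eq (a b : Mˣ) (r : M) (hab : (a : M) * b = b * a)
    (hm : ((a : M) * b) * r = r * ((a : M) * b)) :
    (a : M) * r * ↑a⁻¹ = ↑b⁻¹ * r * ↑b := by
  have hm' : ((b : M) * a) * r = r * ((b : M) * a) := by rw [← hab]; exact hm
  have h : (b : M) * ((a : M) * r * ↑a⁻¹) = r * b := by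
    calc (b : M) * ((a : M) * r * ↑a⁻¹) = (((b : M) * a) * r) * ↑a⁻¹ := by
          simp only [mul_assoc]
      _ = (r * ((b : M) * a)) * ↑a⁻¹ := by rw [hm']
      _ = r * b := by simp only [mul_assoc, Units.mul_inv, mul_one]
  calc (a : M) * r * ↑a⁻¹ = ↑b⁻¹ * ((b : M) * ((a : M) * r * ↑a⁻¹)) := by
        rw [Units.inv_mul_cancel_left]
    _ = ↑b⁻¹ * (r * b) := by rw [h]
    _ = ↑b⁻¹ * r * ↑b := by rw [mul_assoc]

theorem aux_braid (u : Mˣ) (x y : M) (h : x * y * x = y * x * y) :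
    ((u:M) * x * ↑u⁻¹) * ((u:M) * y * ↑u⁻¹) * ((u:M) * x * ↑u⁻¹)
      = ((u:M) * y * ↑u⁻¹) * ((u:M) * x * ↑u⁻¹) * ((u:M) * y * ↑u⁻¹) := by
  have h' : x * (y * (x * (↑u⁻¹ : M))) = y * (x * (y * ↑u⁻¹)) := by
    simp only [← mul_assoc]; rw [h]
  simp only [mul_assoc, Units.inv_mul_cancel_left]
  rw [h']

end AuxMonoid

variable (k V : Type) [Field k] [AddCommGroup V] [Module k V]

/-- `R ⊗ Id` acting on `V ⊗ (V ⊗ V)`. -/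
def op12 (R : V ⊗[k] V →ₗ[k] V ⊗[k] V) :
    V ⊗[k] (V ⊗[k] V) →ₗ[k] V ⊗[k] (V ⊗[k] V) :=
  (TensorProduct.assoc k V V V).toLinearMap ∘ₗ LinearMap.rTensor V R ∘ₗ
    (TensorProduct.assoc k V V V).symm.toLinearMap

/-- `Id ⊗ R` acting on `V ⊗ (V ⊗ V)`. -/
def op23 (R : V ⊗[k] V →ₗ[k] V ⊗[k] V) :
    V ⊗[k] (V ⊗[k] V) →ₗ[k] V ⊗[k] (V ⊗[k] V) :=
  LinearMap.lTensor V R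

/-- A Hecke symmetry with parameter `q`: an operator on `V ⊗ V` satisfying the braid
equation and the Hecke relation `(R - q·Id)(R + Id) = 0`, with `q ≠ 0`. -/
def IsHeckeSymmetry (q : k) (R : V ⊗[k] V →ₗ[k] V ⊗[k] V) : Prop :=
  q ≠ 0 ∧
    op12 k V R ∘ₗ op23 k V R ∘ₗ op12 k V R = op23 k V R ∘ₗ op12 k V R ∘ₗ op23 k V R ∧
    (R - q • LinearMap.id) ∘ₗ (R + LinearMap.id) = 0

/-- The twist `R_ζ = (ζ ⊗ Id) ∘ R ∘ (ζ⁻¹ ⊗ Id)` of `R` by `ζ`. -/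
def twist (ζ : V ≃ₗ[k] V) (R : V ⊗[k] V →ₗ[k] V ⊗[k] V) :
    V ⊗[k] V →ₗ[k] V ⊗[k] V :=
  LinearMap.rTensor V ζ.toLinearMap ∘ₗ R ∘ₗ LinearMap.rTensor V ζ.symm.toLinearMap

/-- `ζ ⊗ Id_W` as a unit of the endomorphism ring of `V ⊗ W`. -/
def rTensorUnit (W : Type) [AddCommGroup W] [Module k W] (ζ : V ≃ₗ[k] V) :
    (Module.End k (V ⊗[k] W))ˣ where
  val := rTensor W ζ.toLinearMap
  inv := rTensor W ζ.symm.toLinearMap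
  val_inv := by rw [Module.End.mul_eq_comp, ← rTensor_comp, Module.End.one_eq_id]; simp
  inv_val := by rw [Module.End.mul_eq_comp, ← rTensor_comp, Module.End.one_eq_id]; simp

/-- `Id ⊗ ζ` as a unit of the endomorphism ring of `V ⊗ V`. -/
def lTensorUnit2 (ζ : V ≃ₗ[k] V) :
    (Module.End k (V ⊗[k] V))ˣ where
  val := lTensor V ζ.toLinearMap
  inv := lTensor V ζ.symm.toLinearMap
  val_inv := by rw [Module.End.mul_eq_comp, ← lTensor_comp, Module.End.one_eq_id]; simp
  inv_val := by rw [Module.End.mul_eq_comp, ← lTensor_comp, Module.End.one_eq_id]; simp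

/-- `Id ⊗ Id ⊗ ζ` as a unit of the endomorphism ring of `V ⊗ (V ⊗ V)`. -/
def lTensorUnit3 (ζ : V ≃ₗ[k] V) :
    (Module.End k (V ⊗[k] (V ⊗[k] V)))ˣ where
  val := lTensor V (lTensor V ζ.toLinearMap)
  inv := lTensor V (lTensor V ζ.symm.toLinearMap)
  val_inv := by rw [Module.End.mul_eq_comp, ← lTensor_comp, ← lTensor_comp, Module.End.one_eq_id]; simp
  inv_val := by rw [Module.End.mul_eq_comp, ← lTensor_comp, ← lTensor_comp, Module.End.one_eq_id]; simp

theorem n1lem (f : V →ₗ[k] V) :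
    (TensorProduct.assoc k V V V).conj (rTensor V (rTensor V f)) = rTensor (V ⊗[k] V) f := by
  rw [LinearEquiv.conj_apply]
  ext x y z
  simp

theorem n3lem (f : V →ₗ[k] V) :
    (TensorProduct.assoc k V V V).conj (lTensor (V ⊗[k] V) f) = lTensor V (lTensor V f) := by
  rw [LinearEquiv.conj_apply]
  ext x y z
  simp

theorem stmt0 (q : k) (R : V ⊗[k] V →ₗ[k] V ⊗[k] V)
    (hR : IsHeckeSymmetry k V q R) (ζ : V ≃ₗ[k] V)
    (hcomm : TensorProduct.map ζ.toLinearMap ζ.toLinearMap ∘ₗ R =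
      R ∘ₗ TensorProduct.map ζ.toLinearMap ζ.toLinearMap) :
    -- (a)
    (twist k V ζ R =
      LinearMap.lTensor V ζ.symm.toLinearMap ∘ₗ R ∘ₗ LinearMap.lTensor V ζ.toLinearMap) ∧
    -- (b)
    IsHeckeSymmetry k V q (twist k V ζ R) ∧
    -- (c)
    (LinearMap.range (twist k V ζ R - q • LinearMap.id) =
      Submodule.map (LinearMap.rTensor V ζ.toLinearMap)
        (LinearMap.range (R - q • LinearMap.id))) ∧
    -- (d)
    (TensorProduct.map ζ.toLinearMap ζ.toLinearMap ∘ₗ twist k V ζ R =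
      twist k V ζ R ∘ₗ TensorProduct.map ζ.toLinearMap ζ.toLinearMap) ∧
    LinearMap.rTensor V ζ.symm.toLinearMap ∘ₗ twist k V ζ R ∘ₗ
      LinearMap.rTensor V ζ.toLinearMap = R := by
  obtain ⟨hq, hbraid, hhecke⟩ := hR
  -- commutation of ζ⊗Id and Id⊗ζ
  have hab : ((rTensorUnit k V V ζ : _ˣ) : Module.End k (V ⊗[k] V)) * ↑(lTensorUnit2 k V ζ)
      = ↑(lTensorUnit2 k V ζ) * ↑(rTensorUnit k V V ζ) := by
    show rTensor V ζ.toLinearMap ∘ₗ lTensor V ζ.toLinearMap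
        = lTensor V ζ.toLinearMap ∘ₗ rTensor V ζ.toLinearMap
    rw [rTensor_comp_lTensor, lTensor_comp_rTensor]
  have hABmap : ((rTensorUnit k V V ζ : _ˣ) : Module.End k (V ⊗[k] V)) * ↑(lTensorUnit2 k V ζ)
      = map ζ.toLinearMap ζ.toLinearMap := by
    show rTensor V ζ.toLinearMap ∘ₗ lTensor V ζ.toLinearMap = _
    rw [rTensor_comp_lTensor]
  have hm : (((rTensorUnit k V V ζ : _ˣ) : Module.End k (V ⊗[k] V)) * ↑(lTensorUnit2 k V ζ)) * R
      = R * (((rTensorUnit k V V ζ : _ˣ) : Module.End k (V ⊗[k] V)) * ↑(lTensorUnit2 k V ζ)) := by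
    rw [hABmap]
    show map ζ.toLinearMap ζ.toLinearMap ∘ₗ R = R ∘ₗ map ζ.toLinearMap ζ.toLinearMap
    exact hcomm
  -- (a)
  have key_a : ((rTensorUnit k V V ζ : _ˣ) : Module.End k (V ⊗[k] V)) * R * ↑(rTensorUnit k V V ζ)⁻¹
      = ↑(lTensorUnit2 k V ζ)⁻¹ * R * ↑(lTensorUnit2 k V ζ) :=
    aux_conj_eq _ _ R hab hm
  have part_a : twist k V ζ R
      = lTensor V ζ.symm.toLinearMap ∘ₗ R ∘ₗ lTensor V ζ.toLinearMap := by
    have h := key_a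
    simp only [Module.End.mul_eq_comp] at h
    rw [twist, ← comp_assoc, ← comp_assoc]
    exact h
  -- twist in End form
  have htw : twist k V ζ R = ((rTensorUnit k V V ζ : _ˣ) : Module.End k (V ⊗[k] V)) * R
      * ↑(rTensorUnit k V V ζ)⁻¹ := by
    simp only [Module.End.mul_eq_comp]
    show twist k V ζ R = (rTensor V ζ.toLinearMap ∘ₗ R) ∘ₗ rTensor V ζ.symm.toLinearMap
    rw [twist, comp_assoc]
  -- Hecke relation for the twist
  have hqid : ((rTensorUnit k V V ζ : _ˣ) : Module.End k (V ⊗[k] V)) * (q • 1)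
      * (↑(rTensorUnit k V V ζ)⁻¹ : Module.End k (V ⊗[k] V)) = q • LinearMap.id := by
    rw [mul_smul_comm, mul_one, smul_mul_assoc, Units.mul_inv, Module.End.one_eq_id]
  have hqid1 : ((rTensorUnit k V V ζ : _ˣ) : Module.End k (V ⊗[k] V)) * 1
      * (↑(rTensorUnit k V V ζ)⁻¹ : Module.End k (V ⊗[k] V)) = LinearMap.id := by
    rw [mul_one, Units.mul_inv, Module.End.one_eq_id]
  have htw2 : twist k V ζ R - q • LinearMap.id
      = ((rTensorUnit k V V ζ : _ˣ) : Module.End k (V ⊗[k] V)) * (R - q • 1)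
        * (↑(rTensorUnit k V V ζ)⁻¹ : Module.End k (V ⊗[k] V)) := by
    rw [htw, mul_sub, sub_mul, hqid]
  have htw3 : twist k V ζ R + LinearMap.id
      = ((rTensorUnit k V V ζ : _ˣ) : Module.End k (V ⊗[k] V)) * (R + 1)
        * (↑(rTensorUnit k V V ζ)⁻¹ : Module.End k (V ⊗[k] V)) := by
    rw [htw, mul_add, add_mul, hqid1]
  have hheckeT : (twist k V ζ R - q • LinearMap.id) ∘ₗ (twist k V ζ R + LinearMap.id) = 0 := by
    rw [← Module.End.mul_eq_comp, htw2, htw3]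
    have h0 : (R - q • 1) * (R + 1) = (0 : Module.End k (V ⊗[k] V)) := by
      rw [Module.End.mul_eq_comp, Module.End.one_eq_id]
      exact hhecke
    calc ((rTensorUnit k V V ζ : _ˣ) : Module.End k (V ⊗[k] V)) * (R - q • 1)
          * ↑(rTensorUnit k V V ζ)⁻¹
          * (((rTensorUnit k V V ζ : _ˣ) : Module.End k (V ⊗[k] V)) * (R + 1)
            * ↑(rTensorUnit k V V ζ)⁻¹)
        = ((rTensorUnit k V V ζ : _ˣ) : Module.End k (V ⊗[k] V))
            * ((R - q • 1) * ((R + 1) * ↑(rTensorUnit k V V ζ)⁻¹)) := by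
          simp only [mul_assoc, Units.inv_mul_cancel_left]
      _ = ((rTensorUnit k V V ζ : _ˣ) : Module.End k (V ⊗[k] V))
            * ((R - q • 1) * (R + 1) * ↑(rTensorUnit k V V ζ)⁻¹) := by
          simp only [mul_assoc]
      _ = 0 := by rw [h0, zero_mul, mul_zero]
  -- braid relation for the twist
  have hop : ∀ S : Module.End k (V ⊗[k] V),
      op12 k V S = (TensorProduct.assoc k V V V).conj (rTensor V S) := by
    intro S
    rw [LinearEquiv.conj_apply, comp_assoc]
    rfl
  have L1 : op12 k V (twist k V ζ R)
      = ((rTensorUnit k V (V ⊗[k] V) ζ : _ˣ) : Module.End k (V ⊗[k] (V ⊗[k] V)))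
        * op12 k V R * ↑(rTensorUnit k V (V ⊗[k] V) ζ)⁻¹ := by
    rw [hop, hop, twist, rTensor_comp, rTensor_comp, LinearEquiv.conj_comp,
      LinearEquiv.conj_comp, n1lem, n1lem]
    simp only [Module.End.mul_eq_comp, comp_assoc]
    rfl
  have L2 : op23 k V (twist k V ζ R)
      = ↑(lTensorUnit3 k V ζ)⁻¹ * op23 k V R * ↑(lTensorUnit3 k V ζ) := by
    show lTensor V (twist k V ζ R) = _
    rw [part_a, lTensor_comp, lTensor_comp]
    simp only [Module.End.mul_eq_comp, comp_assoc]
    rfl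
  have cP13 : Commute ((rTensorUnit k V (V ⊗[k] V) ζ : _ˣ) : Module.End k (V ⊗[k] (V ⊗[k] V)))
      ↑(lTensorUnit3 k V ζ) := by
    show rTensor (V ⊗[k] V) ζ.toLinearMap ∘ₗ lTensor V (lTensor V ζ.toLinearMap)
        = lTensor V (lTensor V ζ.toLinearMap) ∘ₗ rTensor (V ⊗[k] V) ζ.toLinearMap
    rw [rTensor_comp_lTensor, lTensor_comp_rTensor]
  have c1_23 : Commute ((rTensorUnit k V (V ⊗[k] V) ζ : _ˣ) : Module.End k (V ⊗[k] (V ⊗[k] V)))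
      (op23 k V R) := by
    show rTensor (V ⊗[k] V) ζ.toLinearMap ∘ₗ lTensor V R
        = lTensor V R ∘ₗ rTensor (V ⊗[k] V) ζ.toLinearMap
    rw [rTensor_comp_lTensor, lTensor_comp_rTensor]
  have c3_12 : Commute ((lTensorUnit3 k V ζ : _ˣ) : Module.End k (V ⊗[k] (V ⊗[k] V)))
      (op12 k V R) := by
    have h3 : ((lTensorUnit3 k V ζ : _ˣ) : Module.End k (V ⊗[k] (V ⊗[k] V)))
        = (TensorProduct.assoc k V V V).conj (lTensor (V ⊗[k] V) ζ.toLinearMap) :=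
      (n3lem k V _).symm
    show _ * _ = _ * _
    rw [h3, hop, Module.End.mul_eq_comp, Module.End.mul_eq_comp, ← LinearEquiv.conj_comp, ← LinearEquiv.conj_comp]
    congr 1
    rw [lTensor_comp_rTensor, rTensor_comp_lTensor]
  have hwval : ((rTensorUnit k V (V ⊗[k] V) ζ * (lTensorUnit3 k V ζ)⁻¹ : _ˣ)
      : Module.End k (V ⊗[k] (V ⊗[k] V)))
      = ↑(rTensorUnit k V (V ⊗[k] V) ζ) * ↑(lTensorUnit3 k V ζ)⁻¹ := rfl
  have hwinv : ((((rTensorUnit k V (V ⊗[k] V) ζ) * (lTensorUnit3 k V ζ)⁻¹)⁻¹ : _ˣ)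
      : Module.End k (V ⊗[k] (V ⊗[k] V)))
      = ↑(lTensorUnit3 k V ζ) * ↑(rTensorUnit k V (V ⊗[k] V) ζ)⁻¹ := by
    rw [mul_inv_rev, inv_inv, Units.val_mul]
  have hx : op12 k V (twist k V ζ R)
      = ↑(rTensorUnit k V (V ⊗[k] V) ζ * (lTensorUnit3 k V ζ)⁻¹) * op12 k V R
        * ↑(rTensorUnit k V (V ⊗[k] V) ζ * (lTensorUnit3 k V ζ)⁻¹)⁻¹ := by
    rw [L1]
    have hc : (↑(lTensorUnit3 k V ζ)⁻¹ : Module.End k (V ⊗[k] (V ⊗[k] V))) * op12 k V R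
        * ↑(lTensorUnit3 k V ζ) = op12 k V R := by
      have h := aux_conj_self (lTensorUnit3 k V ζ)⁻¹ (op12 k V R)
        (c3_12.symm.units_inv_right.symm)
      rwa [inv_inv] at h
    have h1 : ↑(rTensorUnit k V (V ⊗[k] V) ζ * (lTensorUnit3 k V ζ)⁻¹) * op12 k V R
        * ↑(rTensorUnit k V (V ⊗[k] V) ζ * (lTensorUnit3 k V ζ)⁻¹)⁻¹
        = ↑(rTensorUnit k V (V ⊗[k] V) ζ)
          * (↑(lTensorUnit3 k V ζ)⁻¹ * op12 k V R * ↑(lTensorUnit3 k V ζ))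
          * ↑(rTensorUnit k V (V ⊗[k] V) ζ)⁻¹ := by
      rw [hwval, hwinv]
      simp only [mul_assoc]
    rw [h1, hc]
  have hy : op23 k V (twist k V ζ R)
      = ↑(rTensorUnit k V (V ⊗[k] V) ζ * (lTensorUnit3 k V ζ)⁻¹) * op23 k V R
        * ↑(rTensorUnit k V (V ⊗[k] V) ζ * (lTensorUnit3 k V ζ)⁻¹)⁻¹ := by
    rw [L2]
    have hcy : ↑(rTensorUnit k V (V ⊗[k] V) ζ)
        * (↑(lTensorUnit3 k V ζ)⁻¹ * op23 k V R * ↑(lTensorUnit3 k V ζ))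
        * ↑(rTensorUnit k V (V ⊗[k] V) ζ)⁻¹
        = ↑(lTensorUnit3 k V ζ)⁻¹ * op23 k V R * ↑(lTensorUnit3 k V ζ) :=
      aux_conj_self _ _ (((cP13.units_inv_right).mul_right c1_23).mul_right cP13)
    have h1 : ↑(rTensorUnit k V (V ⊗[k] V) ζ * (lTensorUnit3 k V ζ)⁻¹) * op23 k V R
        * ↑(rTensorUnit k V (V ⊗[k] V) ζ * (lTensorUnit3 k V ζ)⁻¹)⁻¹
        = ↑(rTensorUnit k V (V ⊗[k] V) ζ)
          * (↑(lTensorUnit3 k V ζ)⁻¹ * op23 k V R * ↑(lTensorUnit3 k V ζ))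
          * ↑(rTensorUnit k V (V ⊗[k] V) ζ)⁻¹ := by
      rw [hwval, hwinv]
      simp only [mul_assoc]
    rw [h1, hcy]
  have hbraidR : op12 k V R * op23 k V R * op12 k V R
      = op23 k V R * op12 k V R * op23 k V R := by
    simp only [Module.End.mul_eq_comp, comp_assoc]
    exact hbraid
  have hbraidT : op12 k V (twist k V ζ R) ∘ₗ op23 k V (twist k V ζ R) ∘ₗ op12 k V (twist k V ζ R)
      = op23 k V (twist k V ζ R) ∘ₗ op12 k V (twist k V ζ R) ∘ₗ op23 k V (twist k V ζ R) := by
    have h := aux_braid (rTensorUnit k V (V ⊗[k] V) ζ * (lTensorUnit3 k V ζ)⁻¹)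
      (op12 k V R) (op23 k V R) hbraidR
    rw [← hx, ← hy] at h
    simp only [Module.End.mul_eq_comp, comp_assoc] at h
    exact h
  -- (c)
  have huAA' : rTensor V ζ.toLinearMap ∘ₗ rTensor V ζ.symm.toLinearMap
      = (LinearMap.id : Module.End k (V ⊗[k] V)) := by
    rw [← rTensor_comp]; simp
  have huA'A : rTensor V ζ.symm.toLinearMap ∘ₗ rTensor V ζ.toLinearMap
      = (LinearMap.id : Module.End k (V ⊗[k] V)) := by
    rw [← rTensor_comp]; simp
  have hc1 : twist k V ζ R - q • LinearMap.id
      = rTensor V ζ.toLinearMap ∘ₗ ((R - q • LinearMap.id) ∘ₗ rTensor V ζ.symm.toLinearMap) := by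
    simp only [twist, sub_comp, comp_sub, smul_comp, comp_smul, id_comp]
    rw [huAA']
  have hsurj : range (rTensor V ζ.symm.toLinearMap : V ⊗[k] V →ₗ[k] V ⊗[k] V) = ⊤ := by
    rw [range_eq_top]
    intro y
    exact ⟨rTensor V ζ.toLinearMap y, by simpa using LinearMap.ext_iff.mp huA'A y⟩
  have part_c : LinearMap.range (twist k V ζ R - q • LinearMap.id) =
      Submodule.map (LinearMap.rTensor V ζ.toLinearMap)
        (LinearMap.range (R - q • LinearMap.id)) := by
    rw [hc1, range_comp, range_comp_of_range_eq_top _ hsurj]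
  -- (d)
  have cmt : Commute (((rTensorUnit k V V ζ : _ˣ) : Module.End k (V ⊗[k] V))
      * ↑(lTensorUnit2 k V ζ)) (twist k V ζ R) := by
    rw [htw]
    have c1 : Commute (((rTensorUnit k V V ζ : _ˣ) : Module.End k (V ⊗[k] V))
        * ↑(lTensorUnit2 k V ζ)) ↑(rTensorUnit k V V ζ) :=
      Commute.mul_left (Commute.refl _) hab.symm
    have c2 : Commute (((rTensorUnit k V V ζ : _ˣ) : Module.End k (V ⊗[k] V))
        * ↑(lTensorUnit2 k V ζ)) R := hm
    exact (c1.mul_right c2).mul_right c1.units_inv_right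
  have part_d1 : map ζ.toLinearMap ζ.toLinearMap ∘ₗ twist k V ζ R
      = twist k V ζ R ∘ₗ map ζ.toLinearMap ζ.toLinearMap := by
    have h := cmt.eq
    rw [hABmap] at h
    simpa only [Module.End.mul_eq_comp] using h
  have part_d2 : rTensor V ζ.symm.toLinearMap ∘ₗ twist k V ζ R ∘ₗ rTensor V ζ.toLinearMap
      = R := by
    have h : (↑(rTensorUnit k V V ζ)⁻¹ : Module.End k (V ⊗[k] V)) * twist k V ζ R
        * ↑(rTensorUnit k V V ζ) = R := by
      rw [htw]
      simp only [mul_assoc, Units.inv_mul_cancel_left, Units.inv_mul, mul_one]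
    simp only [Module.End.mul_eq_comp] at h
    rw [← comp_assoc]
    exact h
  exact ⟨part_a, ⟨hq, hbraidT, hheckeT⟩, part_c, part_d1, part_d2⟩
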